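/- Let X be a discrete random variable taking values in [a,b] ⊂ ℝ with mean E(X) = x and finite variance σ²(X), and let f : [a,b] → ℝ be continuously differentiable. Then for any δ > 0, |E f(X) − f(x)| ≤ ω₁(δ)(σ²(X)/δ + σ(X)), where ω₁ is the modulus of continuity of f′ on [a,b]. -/

import Mathlib

/-- Generalized rising factorial with increment `h`: `x^(m,h) = x(x+h)···(x+(m-1)h)`. -/
noncomputable def rfac (x h : ℝ) (m : ℕ) : ℝ := ∏ i ∈ Finset.range m, (x + i * h)

/-- Pólya urn probability `p_{n,k}^{a,b,c}`. -/
noncomputable def polyaProb (a b c : ℝ) (n k : ℕ) : ℝ :=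
  (n.choose k : ℝ) * rfac a c k * rfac b c (n - k) / rfac (a + b) c n

/-- The operator `R_n(f;x)` with `c = -min{x,1-x}/(n-1)`. -/
noncomputable def Rop (n : ℕ) (f : ℝ → ℝ) (x : ℝ) : ℝ :=
  ∑ k ∈ Finset.range (n + 1),
    polyaProb x (1 - x) (-(min x (1 - x)) / ((n : ℝ) - 1)) n k * f ((k : ℝ) / n)

/-- Modulus of continuity of `f` on `[a,b]`. -/
noncomputable def modulus (f : ℝ → ℝ) (a b δ : ℝ) : ℝ :=
  sSup {d : ℝ | ∃ u ∈ Set.Icc a b, ∃ v ∈ Set.Icc a b, |u - v| ≤ δ ∧ d = |f u - f v|}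

theorem discrete_modulus_deriv_estimate (a b : ℝ) (hab : a ≤ b) (m : ℕ)
    (y : Fin m → ℝ) (p : Fin m → ℝ)
    (hy : ∀ i, y i ∈ Set.Icc a b) (hp : ∀ i, 0 ≤ p i) (hpsum : ∑ i, p i = 1)
    (x : ℝ) (hx : ∑ i, p i * y i = x)
    (f f' : ℝ → ℝ)
    (hf : ∀ t ∈ Set.Icc a b, HasDerivAt f (f' t) t)
    (hf' : ContinuousOn f' (Set.Icc a b))
    (δ : ℝ) (hδ : 0 < δ) :
    |(∑ i, p i * f (y i)) - f x| ≤
      modulus f' a b δ *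
        ((∑ i, p i * (y i - x) ^ 2) / δ + Real.sqrt (∑ i, p i * (y i - x) ^ 2)) := by
  set ω := modulus f' a b δ with hωdef
  set V := ∑ i, p i * (y i - x) ^ 2 with hVdef
  -- x ∈ [a,b]
  have hx_mem : x ∈ Set.Icc a b := by
    constructor
    · calc a = ∑ i, p i * a := by rw [← Finset.sum_mul, hpsum, one_mul]
        _ ≤ ∑ i, p i * y i :=
            Finset.sum_le_sum fun i _ => mul_le_mul_of_nonneg_left (hy i).1 (hp i)
        _ = x := hx
    · calc x = ∑ i, p i * y i := hx.symm
        _ ≤ ∑ i, p i * b :=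
            Finset.sum_le_sum fun i _ => mul_le_mul_of_nonneg_left (hy i).2 (hp i)
        _ = b := by rw [← Finset.sum_mul, hpsum, one_mul]
  -- basic facts about the modulus
  have hbdd : BddAbove {d : ℝ | ∃ u ∈ Set.Icc a b, ∃ v ∈ Set.Icc a b,
      |u - v| ≤ δ ∧ d = |f' u - f' v|} := by
    obtain ⟨C, hC⟩ := (isCompact_Icc (a := a) (b := b)).exists_bound_of_continuousOn hf'
    refine ⟨2 * C, ?_⟩
    rintro d ⟨u, hu, v, hv, -, rfl⟩
    have h1 := hC u hu
    have h2 := hC v hv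
    have h3 : ‖f' u - f' v‖ ≤ ‖f' u‖ + ‖f' v‖ := norm_sub_le _ _
    simp only [Real.norm_eq_abs] at h1 h2 h3
    linarith
  have hbase : ∀ u ∈ Set.Icc a b, ∀ v ∈ Set.Icc a b, |u - v| ≤ δ → |f' u - f' v| ≤ ω :=
    fun u hu v hv h => le_csSup hbdd ⟨u, hu, v, hv, h, rfl⟩
  have hω0 : 0 ≤ ω :=
    le_csSup hbdd ⟨a, ⟨le_refl a, hab⟩, a, ⟨le_refl a, hab⟩, by simpa using hδ.le, by simp⟩
  -- chaining bound
  have hchain : ∀ u ∈ Set.Icc a b, ∀ v ∈ Set.Icc a b,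
      |f' u - f' v| ≤ (1 + |u - v| / δ) * ω := by
    intro u hu v hv
    rcases eq_or_ne u v with rfl | huv
    · simpa using hω0
    have hd : 0 < |v - u| := by rw [abs_pos, sub_ne_zero]; exact fun h => huv h.symm
    set N := ⌈|v - u| / δ⌉₊ with hN
    have hN0 : 0 < N := Nat.ceil_pos.2 (by positivity)
    have hNR : (0 : ℝ) < N := by exact_mod_cast hN0
    set w : ℕ → ℝ := fun j => u + (j : ℝ) * (v - u) / N with hw
    have hwmem : ∀ j ≤ N, w j ∈ Set.Icc a b := by
      intro j hj
      have ht0 : (0 : ℝ) ≤ (j : ℝ) / N := by positivity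
      have ht1 : (j : ℝ) / N ≤ 1 := by
        rw [div_le_one hNR]; exact_mod_cast hj
      have hwj : w j = u + ((j : ℝ) / N) * (v - u) := by rw [hw]; ring
      constructor
      · rw [hwj]; nlinarith [hu.1, hv.1]
      · rw [hwj]; nlinarith [hu.2, hv.2]
    have hstep : ∀ j, |w (j + 1) - w j| ≤ δ := by
      intro j
      have : w (j + 1) - w j = (v - u) / N := by rw [hw]; push_cast; ring
      rw [this, abs_div, abs_of_pos hNR]
      rw [div_le_iff₀ hNR]
      have hle := Nat.le_ceil (|v - u| / δ)
      rw [div_le_iff₀ hδ] at hle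
      linarith [hle]
    have key : f' v - f' u = ∑ j ∈ Finset.range N, (f' (w (j + 1)) - f' (w j)) := by
      rw [Finset.sum_range_sub (fun j => f' (w j))]
      congr 2
      · rw [hw]; field_simp; ring
      · simp [hw]
    calc |f' u - f' v| = |f' v - f' u| := abs_sub_comm _ _
      _ = |∑ j ∈ Finset.range N, (f' (w (j + 1)) - f' (w j))| := by rw [key]
      _ ≤ ∑ j ∈ Finset.range N, |f' (w (j + 1)) - f' (w j)| := Finset.abs_sum_le_sum_abs _ _
      _ ≤ ∑ _j ∈ Finset.range N, ω := by
          refine Finset.sum_le_sum fun j hj => ?_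
          have hj' := Finset.mem_range.1 hj
          exact hbase _ (hwmem (j + 1) hj') _ (hwmem j hj'.le) (hstep j)
      _ = (N : ℝ) * ω := by rw [Finset.sum_const, Finset.card_range, nsmul_eq_mul]
      _ ≤ (1 + |u - v| / δ) * ω := by
          refine mul_le_mul_of_nonneg_right ?_ hω0
          have := Nat.ceil_lt_add_one (show (0 : ℝ) ≤ |v - u| / δ by positivity)
          rw [abs_sub_comm]
          exact le_of_lt (by linarith [this])
  -- pointwise Taylor-type bound
  have hpt : ∀ u ∈ Set.Icc a b,
      |f u - f x - f' x * (u - x)| ≤ ω * (|u - x| + (u - x) ^ 2 / δ) := by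
    intro u hu
    obtain ⟨ξ, hξab, hξd, hξeq⟩ :
        ∃ ξ ∈ Set.Icc a b, |ξ - x| ≤ |u - x| ∧ f u - f x = f' ξ * (u - x) := by
      rcases lt_trichotomy u x with h | h | h
      · have hsub : Set.Icc u x ⊆ Set.Icc a b := Set.Icc_subset_Icc hu.1 hx_mem.2
        obtain ⟨c, hc, hceq⟩ := exists_hasDerivAt_eq_slope f f' h
          (fun t ht => ((hf t (hsub ht)).continuousAt).continuousWithinAt)
          (fun t ht => hf t (hsub (Set.mem_Icc_of_Ioo ht)))
        refine ⟨c, hsub (Set.mem_Icc_of_Ioo hc), ?_, ?_⟩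
        · rw [abs_of_nonpos (by linarith [hc.2]), abs_of_nonpos (by linarith)]
          linarith [hc.1]
        · have hne : x - u ≠ 0 := sub_ne_zero.2 h.ne'
          rw [hceq]; field_simp; ring
      · exact ⟨x, hx_mem, by simp [h], by simp [h]⟩
      · have hsub : Set.Icc x u ⊆ Set.Icc a b := Set.Icc_subset_Icc hx_mem.1 hu.2
        obtain ⟨c, hc, hceq⟩ := exists_hasDerivAt_eq_slope f f' h
          (fun t ht => ((hf t (hsub ht)).continuousAt).continuousWithinAt)
          (fun t ht => hf t (hsub (Set.mem_Icc_of_Ioo ht)))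
        refine ⟨c, hsub (Set.mem_Icc_of_Ioo hc), ?_, ?_⟩
        · rw [abs_of_nonneg (by linarith [hc.1]), abs_of_nonneg (by linarith)]
          linarith [hc.2]
        · have hne : u - x ≠ 0 := sub_ne_zero.2 h.ne'
          rw [hceq]; field_simp
    have heq : f u - f x - f' x * (u - x) = (f' ξ - f' x) * (u - x) := by
      rw [hξeq]; ring
    rw [heq, abs_mul]
    have h1 : |f' ξ - f' x| ≤ (1 + |ξ - x| / δ) * ω := hchain ξ hξab x hx_mem
    calc |f' ξ - f' x| * |u - x| ≤ ((1 + |ξ - x| / δ) * ω) * |u - x| :=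
          mul_le_mul_of_nonneg_right h1 (abs_nonneg _)
      _ ≤ ω * (|u - x| + (u - x) ^ 2 / δ) := by
          have h3 : (0 : ℝ) ≤ |u - x| := abs_nonneg _
          have h4 : ω * (|ξ - x| * |u - x|) ≤ ω * (|u - x| * |u - x|) :=
            mul_le_mul_of_nonneg_left (mul_le_mul_of_nonneg_right hξd h3) hω0
          have h5 : |u - x| * |u - x| = (u - x) ^ 2 := by
            rw [← sq_abs]; ring
          rw [← sub_nonneg]
          have expand : ω * (|u - x| + (u - x) ^ 2 / δ) - (1 + |ξ - x| / δ) * ω * |u - x|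
              = (ω * ((u - x) ^ 2) - ω * (|ξ - x| * |u - x|)) / δ := by
            field_simp; ring
          rw [expand]
          apply div_nonneg _ hδ.le
          rw [← h5] at *
          linarith [h4]
  -- algebraic identity
  have h2 : ∑ i, p i * (y i - x) = 0 := by
    simp only [mul_sub]
    rw [Finset.sum_sub_distrib, ← Finset.sum_mul, hpsum, hx, one_mul, sub_self]
  have heqsum : ∑ i, p i * (f (y i) - f x - f' x * (y i - x))
      = (∑ i, p i * f (y i)) - f x := by
    simp only [mul_sub]
    rw [Finset.sum_sub_distrib, Finset.sum_sub_distrib, ← Finset.sum_mul, hpsum, one_mul]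
    have h3 : ∑ i, p i * (f' x * (y i - x)) = 0 := by
      have : ∑ i, p i * (f' x * (y i - x)) = f' x * ∑ i, p i * (y i - x) := by
        rw [Finset.mul_sum]; exact Finset.sum_congr rfl fun i _ => by ring
      rw [this, h2, mul_zero]
    simp only [mul_sub] at h3
    rw [h3, sub_zero]
  -- Cauchy-Schwarz
  have hV0 : 0 ≤ V := Finset.sum_nonneg fun i _ => mul_nonneg (hp i) (sq_nonneg _)
  have hS0 : 0 ≤ ∑ i, p i * |y i - x| :=
    Finset.sum_nonneg fun i _ => mul_nonneg (hp i) (abs_nonneg _)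
  have hS1 : ∑ i, p i * |y i - x| ≤ Real.sqrt V := by
    rw [Real.le_sqrt hS0 hV0]
    calc (∑ i, p i * |y i - x|) ^ 2
        = (∑ i, Real.sqrt (p i) * (Real.sqrt (p i) * |y i - x|)) ^ 2 := by
          congr 1
          exact Finset.sum_congr rfl fun i _ => by
            rw [← mul_assoc, Real.mul_self_sqrt (hp i)]
      _ ≤ (∑ i, Real.sqrt (p i) ^ 2) * ∑ i, (Real.sqrt (p i) * |y i - x|) ^ 2 :=
          Finset.sum_mul_sq_le_sq_mul_sq _ _ _
      _ = V := by
          have e1 : ∑ i, Real.sqrt (p i) ^ 2 = 1 := by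
            rw [← hpsum]; exact Finset.sum_congr rfl fun i _ => Real.sq_sqrt (hp i)
          have e2 : ∑ i, (Real.sqrt (p i) * |y i - x|) ^ 2 = V := by
            rw [hVdef]
            exact Finset.sum_congr rfl fun i _ => by
              rw [mul_pow, Real.sq_sqrt (hp i), sq_abs]
          rw [e1, e2, one_mul]
  -- final assembly
  calc |(∑ i, p i * f (y i)) - f x|
      = |∑ i, p i * (f (y i) - f x - f' x * (y i - x))| := by rw [heqsum]
    _ ≤ ∑ i, |p i * (f (y i) - f x - f' x * (y i - x))| := Finset.abs_sum_le_sum_abs _ _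
    _ = ∑ i, p i * |f (y i) - f x - f' x * (y i - x)| :=
        Finset.sum_congr rfl fun i _ => by rw [abs_mul, abs_of_nonneg (hp i)]
    _ ≤ ∑ i, p i * (ω * (|y i - x| + (y i - x) ^ 2 / δ)) :=
        Finset.sum_le_sum fun i _ =>
          mul_le_mul_of_nonneg_left (hpt (y i) (hy i)) (hp i)
    _ = ω * (∑ i, p i * |y i - x|) + ω / δ * V := by
        rw [hVdef, Finset.mul_sum, Finset.mul_sum, ← Finset.sum_add_distrib]
        exact Finset.sum_congr rfl fun i _ => by ring
    _ ≤ ω * (V / δ + Real.sqrt V) := by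
        have h4 : ω * (∑ i, p i * |y i - x|) ≤ ω * Real.sqrt V :=
          mul_le_mul_of_nonneg_left hS1 hω0
        have h5 : ω / δ * V = ω * (V / δ) := by ring
        linarith [h4, h5.le, h5.ge]
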